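/- Let θ_1, θ_2, θ_3 : ℝ → ℝ be a solution of the identical Kuramoto model for N = 3 and let Δ_1 = θ_1 − θ_2, Δ_2 = θ_2 − θ_3, Δ_3 = θ_3 − θ_1. At every time t such that sin((Δ_1(t) − Δ_2(t))/2) ≠ 0 and sin((Δ_3(t) − Δ_1(t))/2) ≠ 0, the function ψ_1(t) = sin³(Δ_1(t)/2) / (sin((Δ_1(t) − Δ_2(t))/2)·sin((Δ_3(t) − Δ_1(t))/2)) is differentiable at t and satisfies ψ_1'(t) = −K·ψ_1(t). -/

import Mathlib

/-- For the identical Kuramoto model with `N = 3`, at every time `t`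
where `sin((Δ₁−Δ₂)/2) ≠ 0` and `sin((Δ₃−Δ₁)/2) ≠ 0`, the Koopman eigenfunction
`ψ₁ = sin³(Δ₁/2)/(sin((Δ₁−Δ₂)/2)·sin((Δ₃−Δ₁)/2))` is differentiable at `t`
with `ψ₁'(t) = −K·ψ₁(t)`. -/
theorem koopman_eigenfunction_psi1
    (ω K : ℝ) (θ1 θ2 θ3 : ℝ → ℝ)
    (h1 : ∀ t : ℝ, HasDerivAt θ1
      (ω + K / 3 * (Real.sin (θ1 t - θ1 t) + Real.sin (θ2 t - θ1 t) + Real.sin (θ3 t - θ1 t))) t)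
    (h2 : ∀ t : ℝ, HasDerivAt θ2
      (ω + K / 3 * (Real.sin (θ1 t - θ2 t) + Real.sin (θ2 t - θ2 t) + Real.sin (θ3 t - θ2 t))) t)
    (h3 : ∀ t : ℝ, HasDerivAt θ3
      (ω + K / 3 * (Real.sin (θ1 t - θ3 t) + Real.sin (θ2 t - θ3 t) + Real.sin (θ3 t - θ3 t))) t)
    (Δ1 Δ2 Δ3 : ℝ → ℝ)
    (hΔ1 : ∀ t, Δ1 t = θ1 t - θ2 t)
    (hΔ2 : ∀ t, Δ2 t = θ2 t - θ3 t)
    (hΔ3 : ∀ t, Δ3 t = θ3 t - θ1 t)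
    (ψ1 : ℝ → ℝ)
    (hψ1 : ∀ t, ψ1 t = Real.sin (Δ1 t / 2) ^ 3
      / (Real.sin ((Δ1 t - Δ2 t) / 2) * Real.sin ((Δ3 t - Δ1 t) / 2))) :
    ∀ t : ℝ,
      Real.sin ((Δ1 t - Δ2 t) / 2) ≠ 0 →
      Real.sin ((Δ3 t - Δ1 t) / 2) ≠ 0 →
      HasDerivAt ψ1 (-K * ψ1 t) t := by
  intro t hA hB
  have hf1 : Δ1 = fun s => θ1 s - θ2 s := funext hΔ1
  have hf2 : Δ2 = fun s => θ2 s - θ3 s := funext hΔ2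
  have hf3 : Δ3 = fun s => θ3 s - θ1 s := funext hΔ3
  have e1 : HasDerivAt Δ1 ((ω + K / 3 * (Real.sin (θ1 t - θ1 t) + Real.sin (θ2 t - θ1 t) + Real.sin (θ3 t - θ1 t))) - (ω + K / 3 * (Real.sin (θ1 t - θ2 t) + Real.sin (θ2 t - θ2 t) + Real.sin (θ3 t - θ2 t)))) t := by
    rw [hf1]; exact (h1 t).sub (h2 t)
  have e2 : HasDerivAt Δ2 ((ω + K / 3 * (Real.sin (θ1 t - θ2 t) + Real.sin (θ2 t - θ2 t) + Real.sin (θ3 t - θ2 t))) - (ω + K / 3 * (Real.sin (θ1 t - θ3 t) + Real.sin (θ2 t - θ3 t) + Real.sin (θ3 t - θ3 t)))) t := by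
    rw [hf2]; exact (h2 t).sub (h3 t)
  have e3 : HasDerivAt Δ3 ((ω + K / 3 * (Real.sin (θ1 t - θ3 t) + Real.sin (θ2 t - θ3 t) + Real.sin (θ3 t - θ3 t))) - (ω + K / 3 * (Real.sin (θ1 t - θ1 t) + Real.sin (θ2 t - θ1 t) + Real.sin (θ3 t - θ1 t)))) t := by
    rw [hf3]; exact (h3 t).sub (h1 t)
  have num : HasDerivAt (fun s => Real.sin (Δ1 s / 2) ^ 3) _ t :=
    ((e1.div_const 2).sin).pow 3
  have den : HasDerivAt (fun s => Real.sin ((Δ1 s - Δ2 s) / 2) * Real.sin ((Δ3 s - Δ1 s) / 2)) _ t :=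
    (((e1.sub e2).div_const 2).sin).mul (((e3.sub e1).div_const 2).sin)
  have hD : Real.sin ((Δ1 t - Δ2 t) / 2) * Real.sin ((Δ3 t - Δ1 t) / 2) ≠ 0 := mul_ne_zero hA hB
  have hq := num.div den hD
  have hfun : ψ1 = fun s => Real.sin (Δ1 s / 2) ^ 3 / (Real.sin ((Δ1 s - Δ2 s) / 2) * Real.sin ((Δ3 s - Δ1 s) / 2)) := funext hψ1
  rw [hfun]
  refine hq.congr_deriv ?_
  simp only [hΔ1, hΔ2, hΔ3, Pi.sub_apply] at *
  set a := θ1 t with ha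
  set b := θ2 t with hb
  set c := θ3 t with hc
  obtain ⟨u, hu⟩ : ∃ u, a - b = 2*u := ⟨(a-b)/2, by ring⟩
  obtain ⟨v, hv⟩ : ∃ v, b - c = 2*v := ⟨(b-c)/2, by ring⟩
  rw [show (a - b - (b - c)) / 2 = u - v by linarith,
      show (c - a - (a - b)) / 2 = -(2*u+v) by linarith,
      show (a - b) / 2 = u by linarith,
      show b - a = -(2*u) by linarith,
      show c - a = -(2*u+2*v) by linarith,
      show c - b = -(2*v) by linarith,
      show a - c = 2*u+2*v by linarith,
      hu, hv]
  rw [show (a - b - (b - c)) / 2 = u - v by linarith] at hA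
  rw [show (c - a - (a - b)) / 2 = -(2*u+v) by linarith] at hB
  field_simp [hA, hB]
  have hB' : Real.sin (-v + -(2*u)) ≠ 0 := by
    rw [show (-v + -(2*u)) = -(2*u+v) by ring]; exact hB
  simp only [sub_self, mul_zero, zero_mul, Real.sin_zero]
  simp only [Real.sin_neg, Real.cos_neg, Real.sin_add, Real.cos_add, Real.sin_sub, Real.cos_sub,
    Real.sin_two_mul, Real.cos_two_mul]
  ring_nf
  linear_combination ((-12) * K * Real.sin u ^ 4 * Real.sin v * Real.cos v + (-24) * K * Real.sin u ^ 3 * Real.cos u ^ 3 * Real.sin v ^ 2 + (12) * K * Real.sin u ^ 4 * Real.cos u ^ 2 * Real.sin v * Real.cos v ^ 3 + (6) * K * Real.sin u ^ 4 * Real.sin v * Real.cos v ^ 3 + (-12) * K * Real.sin u ^ 5 * Real.cos u * Real.sin v ^ 2 * Real.cos v ^ 2 + (-12) * K * Real.sin u ^ 2 * Real.cos u ^ 4 * Real.sin v ^ 3 * Real.cos v + (6) * K * Real.sin u ^ 2 * Real.cos u ^ 2 * Real.sin v ^ 3 * Real.cos v + (12) * K * Real.sin u ^ 3 * Real.cos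 u ^ 3 * Real.sin v ^ 4 + (6) * K * Real.sin u ^ 3 * Real.cos u * Real.sin v ^ 4 + (6) * K * Real.sin u ^ 3 * Real.cos u * Real.sin v ^ 2 * Real.cos v ^ 2 + (12) * K * Real.sin u ^ 4 * Real.sin v ^ 3 * Real.cos v) * Real.sin_sq_add_cos_sq u + ((-6) * K * Real.sin u ^ 5 * Real.cos u * Real.sin v ^ 2 + (6) * K * Real.sin u ^ 5 * Real.cos u * Real.cos v ^ 2 + (-12) * K * Real.sin u ^ 6 * Real.sin v * Real.cos v + (6) * K * Real.sin u ^ 4 * Real.sin v * Real.cos v + (6) * K * Real.sin u ^ 3 * Real.cos u * Real.sin v ^ 2) * Real.sin_sq_add_cos_sq v
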